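/- For every natural number n ≥ 4, the matrix X₀ = Φ(e₁∧e₂) is a highest root vector of 𝔰𝔬(B) in the following precise sense: for every Y ∈ 𝔰𝔬(B) there is a scalar c ∈ ℂ with [X₀,[X₀,Y]] = c·X₀, and moreover there exists Y ∈ 𝔰𝔬(B) with [X₀,[X₀,Y]] = X₀; that is, the set {[X₀,[X₀,Y]] : Y ∈ 𝔰𝔬(B)} equals the line ℂ·X₀. -/

import Mathlib

noncomputable section
open Matrix ExteriorAlgebra

/-- The bilinear form B(x,y) = Σ_{k=1}^{m} x_k y_{m+1-k} (0-indexed via `Fin.rev`). -/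
def bilinB (m : ℕ) (x y : Fin m → ℂ) : ℂ := ∑ k, x k * y k.rev

/-- SO(B): elements of SL_m(ℂ) preserving B. -/
def SOB (m : ℕ) : Set (Matrix.SpecialLinearGroup (Fin m) ℂ) :=
  {g | ∀ x y, bilinB m (g.1.mulVec x) (g.1.mulVec y) = bilinB m x y}

/-- The 2-vector u ∧ v as an element of ⋀²ℂ^m. -/
def wedge (m : ℕ) (u v : Fin m → ℂ) : ⋀[ℂ]^2 (Fin m → ℂ) :=
  ⟨ι ℂ u * ι ℂ v, by
    show _ ∈ LinearMap.range (ι ℂ : (Fin m → ℂ) →ₗ[ℂ] _) ^ 2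
    rw [pow_two]
    exact Submodule.mul_mem_mul (LinearMap.mem_range_self _ u) (LinearMap.mem_range_self _ v)⟩

lemma map_mem_pow2 {m : ℕ} (f : (Fin m → ℂ) →ₗ[ℂ] (Fin m → ℂ)) :
    ∀ x ∈ ⋀[ℂ]^2 (Fin m → ℂ),
      (ExteriorAlgebra.map f) x ∈ ⋀[ℂ]^2 (Fin m → ℂ) := by
  intro x hx
  have h2 : Submodule.map (ExteriorAlgebra.map f).toLinearMap
      (LinearMap.range (ι ℂ (M := Fin m → ℂ))) ≤ LinearMap.range (ι ℂ (M := Fin m → ℂ)) := by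
    rw [← LinearMap.range_comp, map_comp_ι, LinearMap.range_comp]
    exact LinearMap.map_le_range
  have h1 : Submodule.map (ExteriorAlgebra.map f).toLinearMap (⋀[ℂ]^2 (Fin m → ℂ))
      ≤ ⋀[ℂ]^2 (Fin m → ℂ) := by
    show Submodule.map _ (LinearMap.range (ι ℂ (M := Fin m → ℂ)) ^ 2)
      ≤ LinearMap.range (ι ℂ (M := Fin m → ℂ)) ^ 2
    rw [Submodule.map_pow, pow_two, pow_two]
    exact mul_le_mul' h2 h2
  exact h1 ⟨x, hx, rfl⟩

/-- The induced map ⋀²g on the second exterior power. -/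
def mapPow2 {m : ℕ} (f : (Fin m → ℂ) →ₗ[ℂ] (Fin m → ℂ)) :
    ⋀[ℂ]^2 (Fin m → ℂ) →ₗ[ℂ] ⋀[ℂ]^2 (Fin m → ℂ) :=
  (ExteriorAlgebra.map f).toLinearMap.restrict (map_mem_pow2 f)

/-- The Lie algebra 𝔰𝔬(B) = {X : B(Xx,y) + B(x,Xy) = 0 for all x,y}. -/
def soB (m : ℕ) : Set (Matrix (Fin m) (Fin m) ℂ) :=
  {X | ∀ x y, bilinB m (X.mulVec x) y + bilinB m x (X.mulVec y) = 0}

/-- The defining property of Φ : ⋀²ℂ^m → Mat_m(ℂ), namely Φ(u∧v)(x) = B(v,x)u − B(u,x)v. -/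
def IsPhi (m : ℕ) (Φ : ⋀[ℂ]^2 (Fin m → ℂ) →ₗ[ℂ] Matrix (Fin m) (Fin m) ℂ) : Prop :=
  ∀ u v x : Fin m → ℂ,
    (Φ (wedge m u v)).mulVec x = bilinB m v x • u - bilinB m u x • v

-- AUX PART (to be inserted before theorem)
namespace Stmt5Aux
open Matrix ExteriorAlgebra

/-- The alternating map (u,v) ↦ (matrix with entries u i * v j.rev − u j.rev * v i). -/
def altA (m : ℕ) : (Fin m → ℂ) [⋀^Fin 2]→ₗ[ℂ] Matrix (Fin m) (Fin m) ℂ :=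
  (Matrix.ofLinearEquiv ℂ).toLinearMap.compAlternatingMap <|
  AlternatingMap.pi fun i => AlternatingMap.pi fun j =>
    (Matrix.detRowAlternating (n := Fin 2) (R := ℂ)).compLinearMap
      (LinearMap.pi fun a => LinearMap.proj (![i, j.rev] a))

lemma det2 (w : Fin 2 → Fin 2 → ℂ) :
    Matrix.detRowAlternating (R := ℂ) w = w 0 0 * w 1 1 - w 0 1 * w 1 0 :=
  Matrix.det_fin_two (Matrix.of w)

lemma altA_apply (m : ℕ) (u v : Fin m → ℂ) (i j : Fin m) :
    altA m ![u, v] i j = u i * v j.rev - u j.rev * v i := by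
  simp only [altA, LinearMap.compAlternatingMap_apply, LinearEquiv.coe_coe,
    Matrix.coe_ofLinearEquiv, AlternatingMap.pi_apply, Matrix.of_apply,
    AlternatingMap.compLinearMap_apply, LinearMap.pi_apply, LinearMap.proj_apply]
  rw [det2]
  simp

def philin (m : ℕ) : ⋀[ℂ]^2 (Fin m → ℂ) →ₗ[ℂ] Matrix (Fin m) (Fin m) ℂ :=
  (ExteriorAlgebra.liftAlternating
    (fun i => match i with
      | 2 => altA m
      | _ => 0)) ∘ₗ (Submodule.subtype _)

lemma wedge_eq (m : ℕ) (u v : Fin m → ℂ) :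
    (wedge m u v : ExteriorAlgebra ℂ (Fin m → ℂ)) = ιMulti ℂ 2 ![u, v] := by
  rw [ιMulti_succ_apply, ιMulti_succ_apply, ιMulti_zero_apply]
  simp [wedge, Matrix.vecTail]

lemma philin_wedge (m : ℕ) (u v : Fin m → ℂ) :
    philin m (wedge m u v) = altA m ![u, v] := by
  rw [philin, LinearMap.comp_apply, Submodule.coe_subtype, wedge_eq,
    liftAlternating_apply_ιMulti]
  rfl

lemma sum_rev {m : ℕ} (f : Fin m → ℂ) : ∑ k : Fin m, f k.rev = ∑ k : Fin m, f k :=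
  Fintype.sum_equiv Fin.revPerm _ _ (fun _ => rfl)

lemma bilinB_rev (m : ℕ) (x y : Fin m → ℂ) : bilinB m x y = ∑ k, x k.rev * y k := by
  rw [bilinB, ← sum_rev (fun k => x k.rev * y k)]
  simp [Fin.rev_rev]

lemma isPhi_philin (m : ℕ) : IsPhi m (philin m) := by
  intro u v x
  funext a
  rw [philin_wedge]
  show ∑ j, altA m ![u, v] a j * x j = _
  simp only [altA_apply, Pi.sub_apply, Pi.smul_apply, smul_eq_mul, bilinB_rev,
    Finset.sum_mul, ← Finset.sum_sub_distrib]
  exact Finset.sum_congr rfl fun j _ => by ring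

lemma bilinB_single_right (m : ℕ) (x : Fin m → ℂ) (j : Fin m) :
    bilinB m x (Pi.single j 1) = x j.rev := by
  rw [bilinB, Finset.sum_eq_single j.rev]
  · simp [Pi.single_apply, Fin.rev_rev]
  · intro k _ hk
    rw [Pi.single_apply, if_neg (fun h => hk (by rw [← h, Fin.rev_rev])), mul_zero]
  · simp

lemma bilinB_single_left (m : ℕ) (y : Fin m → ℂ) (i : Fin m) :
    bilinB m (Pi.single i 1) y = y i.rev := by
  rw [bilinB, Finset.sum_eq_single i]
  · simp
  · intro k _ hk
    rw [Pi.single_apply, if_neg hk, zero_mul]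
  · simp

lemma soB_entry {m : ℕ} {Y : Matrix (Fin m) (Fin m) ℂ} (hY : Y ∈ soB m) (a b : Fin m) :
    Y a b + Y b.rev a.rev = 0 := by
  have h := hY (Pi.single b 1) (Pi.single a.rev 1)
  simp only [Matrix.mulVec_single, mul_one, MulOpposite.op_one, one_smul] at h
  rw [bilinB_single_right, bilinB_single_left, Fin.rev_rev] at h
  exact h

lemma mem_soB {m : ℕ} {Y : Matrix (Fin m) (Fin m) ℂ}
    (h : ∀ a b, Y a b + Y b.rev a.rev = 0) : Y ∈ soB m := by
  intro x y
  have h1 : bilinB m (Y.mulVec x) y = ∑ a, ∑ i, Y a.rev i * x i * y a := by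
    rw [bilinB_rev]
    refine Finset.sum_congr rfl fun a _ => ?_
    rw [Matrix.mulVec, dotProduct, Finset.sum_mul]
  have h2 : bilinB m x (Y.mulVec y) = ∑ a, ∑ i, Y i.rev a * x i * y a := by
    rw [bilinB]
    simp only [Matrix.mulVec, dotProduct, Finset.mul_sum]
    rw [Finset.sum_comm]
    exact Finset.sum_congr rfl fun a _ => Finset.sum_congr rfl fun i _ => by ring
  rw [h1, h2, ← Finset.sum_add_distrib]
  refine Finset.sum_eq_zero fun a _ => ?_
  rw [← Finset.sum_add_distrib]
  refine Finset.sum_eq_zero fun i _ => ?_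
  have hh := h a.rev i
  rw [Fin.rev_rev] at hh
  have : Y a.rev i * x i * y a + Y i.rev a * x i * y a
      = (Y a.rev i + Y i.rev a) * (x i * y a) := by ring
  rw [this, hh, zero_mul]

lemma triple {m : ℕ} (i j k l : Fin m) (a b : ℂ) (M : Matrix (Fin m) (Fin m) ℂ) :
    Matrix.single i j a * M * Matrix.single k l b
      = Matrix.single i l (a * M j k * b) := by
  ext r s
  rcases eq_or_ne s l with rfl | hs
  · rw [Matrix.mul_single_apply_same]
    rcases eq_or_ne r i with rfl | hr
    · rw [Matrix.single_mul_apply_same, Matrix.single_apply_same, mul_assoc]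
    · rw [Matrix.single_mul_apply_of_ne _ _ _ _ _ hr,
        Matrix.single_apply_of_row_ne (Ne.symm hr), zero_mul]
  · rw [Matrix.mul_single_apply_of_ne _ _ _ _ _ hs,
      Matrix.single_apply_of_col_ne i r (fun h => hs h.symm)]

lemma bracket_calc {m : ℕ} (i0 i1 p q : Fin m)
    (h01 : i0 ≠ i1) (hpq : p ≠ q) (hp0 : p ≠ i0) (hp1 : p ≠ i1) (hq0 : q ≠ i0) (hq1 : q ≠ i1)
    (Y : Matrix (Fin m) (Fin m) ℂ) (hY1 : Y p i1 = 0) (hY2 : Y q i0 = 0)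
    (hY3 : Y q i1 = - Y p i0) :
    ⁅(Matrix.single i0 p (1:ℂ) + Matrix.single i1 q (-1:ℂ)),
      ⁅(Matrix.single i0 p (1:ℂ) + Matrix.single i1 q (-1:ℂ)), Y⁆⁆
      = (-2 * Y p i0) • (Matrix.single i0 p (1:ℂ) + Matrix.single i1 q (-1:ℂ)) := by
  set X := Matrix.single i0 p (1:ℂ) + Matrix.single i1 q (-1:ℂ) with hX
  have hXX : X * X = 0 := by
    rw [hX]
    rw [add_mul, mul_add, mul_add,
      Matrix.single_mul_single_of_ne (h := hp0), Matrix.single_mul_single_of_ne (h := hp1),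
      Matrix.single_mul_single_of_ne (h := hq0), Matrix.single_mul_single_of_ne (h := hq1)]
    simp
  have hXYX : X * Y * X = Y p i0 • X := by
    rw [hX, add_mul, add_mul, mul_add, mul_add, triple, triple, triple, triple, hY1, hY2, hY3]
    rw [smul_add, Matrix.smul_single, Matrix.smul_single]
    rw [show (1:ℂ) * Y p i0 * 1 = Y p i0 by ring, show (1:ℂ) * 0 * (-1) = 0 by ring,
      show (-1:ℂ) * 0 * 1 = 0 by ring, show (-1:ℂ) * (- Y p i0) * (-1) = - Y p i0 by ring,
      show Y p i0 • (1:ℂ) = Y p i0 by simp, show Y p i0 • (-1:ℂ) = - Y p i0 by simp]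
    simp
  have key : ⁅X, ⁅X, Y⁆⁆ = X*X*Y - X*Y*X - X*Y*X + Y*(X*X) := by
    rw [Ring.lie_def, Ring.lie_def]
    noncomm_ring
  rw [key, hXX, hXYX, zero_mul, mul_zero]
  module

lemma X0_eq {m : ℕ} (Φ : ⋀[ℂ]^2 (Fin m → ℂ) →ₗ[ℂ] Matrix (Fin m) (Fin m) ℂ)
    (hΦ : IsPhi m Φ) (i0 i1 : Fin m) :
    Φ (wedge m (Pi.single i0 1) (Pi.single i1 1))
      = Matrix.single i0 i1.rev (1:ℂ) + Matrix.single i1 i0.rev (-1:ℂ) := by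
  ext a b
  have h := hΦ (Pi.single i0 1) (Pi.single i1 1) (Pi.single b 1)
  simp only [Matrix.mulVec_single, mul_one, bilinB_single_right, MulOpposite.op_one, one_smul] at h
  have h2 := congrFun h a
  simp only [Matrix.col_apply] at h2
  rw [h2]
  simp only [Pi.sub_apply, Pi.smul_apply, smul_eq_mul, Pi.single_apply,
    Matrix.add_apply, Matrix.single, Matrix.of_apply]
  have ha := a.isLt
  have hb := b.isLt
  have hi0 := i0.isLt
  have hi1 := i1.isLt
  simp only [Fin.ext_iff, Fin.val_rev]
  split_ifs
  all_goals (try ring)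
  all_goals (exfalso; omega)

lemma Yc_mem {m : ℕ} (i0 i1 : Fin m) (d : ℂ) :
    (Matrix.single i1.rev i0 d + Matrix.single i0.rev i1 (-d)) ∈ soB m := by
  apply mem_soB
  intro a b
  simp only [Matrix.add_apply, Matrix.single, Matrix.of_apply]
  have ha := a.isLt
  have hb := b.isLt
  have hi0 := i0.isLt
  have hi1 := i1.isLt
  simp only [Fin.ext_iff, Fin.val_rev]
  split_ifs
  all_goals (try ring)
  all_goals (exfalso; omega)

end Stmt5Aux

/-- X₀ = Φ(e₁∧e₂) is a highest root vector of 𝔰𝔬(B):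
every [X₀,[X₀,Y]] is a multiple of X₀, some Y realizes X₀ itself, and
{[X₀,[X₀,Y]] : Y ∈ 𝔰𝔬(B)} = ℂ·X₀. -/
theorem stmt5 (n : ℕ) (hn : 4 ≤ n) :
    (∃ Φ : ⋀[ℂ]^2 (Fin (2*n) → ℂ) →ₗ[ℂ] Matrix (Fin (2*n)) (Fin (2*n)) ℂ,
      IsPhi (2*n) Φ) ∧
    ∀ Φ : ⋀[ℂ]^2 (Fin (2*n) → ℂ) →ₗ[ℂ] Matrix (Fin (2*n)) (Fin (2*n)) ℂ,
      IsPhi (2*n) Φ →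
        letI X₀ : Matrix (Fin (2*n)) (Fin (2*n)) ℂ :=
          Φ (wedge (2*n) (Pi.single (⟨0, by omega⟩ : Fin (2*n)) 1)
            (Pi.single (⟨1, by omega⟩ : Fin (2*n)) 1))
        (∀ Y ∈ soB (2*n), ∃ c : ℂ, ⁅X₀, ⁅X₀, Y⁆⁆ = c • X₀) ∧
        (∃ Y ∈ soB (2*n), ⁅X₀, ⁅X₀, Y⁆⁆ = X₀) ∧
        ({Z : Matrix (Fin (2*n)) (Fin (2*n)) ℂ | ∃ Y ∈ soB (2*n), Z = ⁅X₀, ⁅X₀, Y⁆⁆} =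
          {Z : Matrix (Fin (2*n)) (Fin (2*n)) ℂ | ∃ c : ℂ, Z = c • X₀}) := by
  constructor
  · exact ⟨Stmt5Aux.philin (2*n), Stmt5Aux.isPhi_philin (2*n)⟩
  intro Φ hΦ
  set i0 : Fin (2*n) := ⟨0, by omega⟩ with hi0
  set i1 : Fin (2*n) := ⟨1, by omega⟩ with hi1
  set p : Fin (2*n) := i1.rev with hp
  set q : Fin (2*n) := i0.rev with hq
  have hpv : (p : ℕ) = 2*n - 2 := by rw [hp, Fin.val_rev]
  have hqv : (q : ℕ) = 2*n - 1 := by rw [hq, Fin.val_rev]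
  have h01 : i0 ≠ i1 := by simp [Fin.ext_iff, hi0, hi1]
  have hpq : p ≠ q := by simp [Fin.ext_iff, hpv, hqv]; omega
  have hp0 : p ≠ i0 := by simp [Fin.ext_iff, hpv, hi0]; omega
  have hp1 : p ≠ i1 := by simp [Fin.ext_iff, hpv, hi1]; omega
  have hq0 : q ≠ i0 := by simp [Fin.ext_iff, hqv, hi0]; omega
  have hq1 : q ≠ i1 := by simp [Fin.ext_iff, hqv, hi1]; omega
  have hX0 : Φ (wedge (2*n) (Pi.single i0 1) (Pi.single i1 1))
      = Matrix.single i0 p (1:ℂ) + Matrix.single i1 q (-1:ℂ) :=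
    Stmt5Aux.X0_eq Φ hΦ i0 i1
  rw [hX0]
  set X : Matrix (Fin (2*n)) (Fin (2*n)) ℂ :=
    Matrix.single i0 p (1:ℂ) + Matrix.single i1 q (-1:ℂ) with hXdef
  -- the main bracket formula, for every Y ∈ soB
  have main : ∀ Y ∈ soB (2*n), ⁅X, ⁅X, Y⁆⁆ = (-2 * Y p i0) • X := by
    intro Y hY
    have e1 : Y p i1 = 0 := by
      have h' := Stmt5Aux.soB_entry hY i1.rev i1
      rw [Fin.rev_rev] at h'
      rw [hp]
      exact add_self_eq_zero.mp h'
    have e2 : Y q i0 = 0 := by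
      have h' := Stmt5Aux.soB_entry hY i0.rev i0
      rw [Fin.rev_rev] at h'
      rw [hq]
      exact add_self_eq_zero.mp h'
    have e3 : Y q i1 = - Y p i0 := by
      have h' := Stmt5Aux.soB_entry hY i0.rev i1
      rw [Fin.rev_rev] at h'
      rw [hq, hp]
      exact eq_neg_of_add_eq_zero_left h'
    exact Stmt5Aux.bracket_calc i0 i1 p q h01 hpq hp0 hp1 hq0 hq1 Y e1 e2 e3
  have mem' : ∀ d : ℂ, (Matrix.single p i0 d + Matrix.single q i1 (-d))
      ∈ soB (2*n) := by
    intro d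
    rw [hp, hq]
    exact Stmt5Aux.Yc_mem i0 i1 d
  have entry : ∀ d : ℂ,
      (Matrix.single p i0 d + Matrix.single q i1 (-d)) p i0 = d := by
    intro d
    rw [Matrix.add_apply, Matrix.single_apply_same,
      Matrix.single_apply_of_row_ne hpq.symm, add_zero]
  have brk : ∀ d : ℂ,
      ⁅X, ⁅X, Matrix.single p i0 d + Matrix.single q i1 (-d)⁆⁆
        = (-2 * d) • X := by
    intro d
    rw [main _ (mem' d), entry d]
  refine ⟨fun Y hY => ⟨-2 * Y p i0, main Y hY⟩, ?_, ?_⟩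
  · refine ⟨_, mem' (-(1/2)), ?_⟩
    rw [brk]
    norm_num
  · ext Z
    simp only [Set.mem_setOf_eq]
    constructor
    · rintro ⟨Y, hY, rfl⟩
      exact ⟨-2 * Y p i0, main Y hY⟩
    · rintro ⟨c, rfl⟩
      refine ⟨_, mem' (-(c/2)), ?_⟩
      rw [brk]
      congr 1
      ring
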